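/- arXiv:2604.24318 — 2 statements merged into one kernel-verified Lean document; each statement's English description precedes it below -/
import Mathlib

section
/- Let m > 1, δ > 0, U₀, V₀, d₁, d₂ > 0 with d₁ < d₂, and let ι = ι(U₀, δV₀) be the unique positive constant with 2U₀/(δV₀) = ι ∫₀^ι e^{(ι²−s²)/4} ds. For each k > 0 let (u_{k,δ}, v_{k,δ}) be nonnegative classical solutions of the scaled system ∂_t u_{k,δ} = ∂_{xx} u_{k,δ} − δk u_{k,δ} v_{k,δ}, ∂_t v_{k,δ} = −k u_{k,δ} v_{k,δ} on (d₁,d₂) × (0,T), with u_{k,δ}(x,0) = 0, v_{k,δ}(x,0) = V₀, 0 ≤ u_{k,δ} ≤ U₀, so that v_{k,δ}(x,t) = V₀ exp(−k z_{k,δ}(x,t)) with z_{k,δ}(x,t) := ∫₀ᵗ u_{k,δ}(x,s) ds; assume that u_{k,δ}(x,t) → f^{(U₀,δV₀)}(x/√t) and z_{k,δ} → ∫₀ᵗ f^{(U₀,δV₀)}(x/√s) ds uniformly on [d₁,d₂] × [0, d₂² ι^{−2}] as k → ∞. Fix constants λ₁, λ₂ > 0. Then there exists K > 0 such that for all k >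 K, k u_{k,δ}^m v_{k,δ} − λ₁ k u_{k,δ} v_{k,δ} − λ₂ u_{k,δ} ≤ 0 at every point (x,t) ∈ (d₁,d₂) × (0, d₂² ι^{−2}). -/
open Set Filter Real MeasureTheory Topology

noncomputable section

/-- The self-similar profile `f^{(U₀,V₀)}` associated with a constant `ι > 0`:
`f(η) = U₀ (1 − (∫₀^η e^{−s²/4} ds)/(∫₀^ι e^{−s²/4} ds))` for `η ≤ ι`, and `0` for
`η > ι`. -/
def profile (U₀ ι η : ℝ) : ℝ :=
  if η ≤ ι then
    U₀ * (1 - (∫ s in (0:ℝ)..η, Real.exp (-s^2/4)) / (∫ s in (0:ℝ)..ι, Real.exp (-s^2/4)))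
  else 0

lemma gexp_cont : Continuous fun s : ℝ => Real.exp (-s^2/4) := by
  exact Real.continuous_exp.comp (by continuity)

lemma gexp_intble (a b : ℝ) :
    IntervalIntegrable (fun s : ℝ => Real.exp (-s^2/4)) volume a b :=
  gexp_cont.intervalIntegrable a b

lemma gint_split (a b : ℝ) :
    (∫ s in (0:ℝ)..a, Real.exp (-s^2/4)) + (∫ s in a..b, Real.exp (-s^2/4))
      = ∫ s in (0:ℝ)..b, Real.exp (-s^2/4) :=
  intervalIntegral.integral_add_adjacent_intervals (gexp_intble 0 a) (gexp_intble a b)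

lemma gint_seg_nonneg {a b : ℝ} (h : a ≤ b) :
    0 ≤ ∫ s in a..b, Real.exp (-s^2/4) :=
  intervalIntegral.integral_nonneg h (fun _ _ => (Real.exp_pos _).le)

lemma gint_mono {a b : ℝ} (h : a ≤ b) :
    (∫ s in (0:ℝ)..a, Real.exp (-s^2/4)) ≤ ∫ s in (0:ℝ)..b, Real.exp (-s^2/4) := by
  have h1 := gint_split a b
  have h2 := gint_seg_nonneg h
  linarith

lemma gint_pos {ι : ℝ} (hι : 0 < ι) :
    0 < ∫ s in (0:ℝ)..ι, Real.exp (-s^2/4) :=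
  intervalIntegral.intervalIntegral_pos_of_pos_on (gexp_intble 0 ι)
    (fun _ _ => Real.exp_pos _) hι

lemma gint_le_self {ι : ℝ} (hι : 0 < ι) :
    (∫ s in (0:ℝ)..ι, Real.exp (-s^2/4)) ≤ ι := by
  have h := intervalIntegral.integral_mono_on hι.le (gexp_intble 0 ι)
    intervalIntegrable_const (f := fun s : ℝ => Real.exp (-s^2/4)) (g := fun _ => (1:ℝ))
    (fun s _ => by
      rw [← Real.exp_zero]
      exact Real.exp_le_exp.mpr (by nlinarith [sq_nonneg s]))
  simpa using h

lemma profile_nonneg {U₀ ι : ℝ} (hU : 0 ≤ U₀) (hι : 0 < ι) (η : ℝ) :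
    0 ≤ profile U₀ ι η := by
  unfold profile
  split_ifs with h
  · have hAI : (∫ s in (0:ℝ)..η, Real.exp (-s^2/4)) ≤ ∫ s in (0:ℝ)..ι, Real.exp (-s^2/4) :=
      gint_mono h
    have hI := gint_pos hι
    have : (∫ s in (0:ℝ)..η, Real.exp (-s^2/4)) / (∫ s in (0:ℝ)..ι, Real.exp (-s^2/4)) ≤ 1 :=
      (div_le_one hI).mpr hAI
    nlinarith
  · exact le_refl 0

lemma profile_le {U₀ ι : ℝ} (hU : 0 ≤ U₀) (hι : 0 < ι) {η : ℝ} (hη : 0 ≤ η) :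
    profile U₀ ι η ≤ U₀ := by
  unfold profile
  split_ifs with h
  · have hA : 0 ≤ ∫ s in (0:ℝ)..η, Real.exp (-s^2/4) := by
      have := gint_mono hη
      simpa using this
    have hI := gint_pos hι
    have : 0 ≤ (∫ s in (0:ℝ)..η, Real.exp (-s^2/4)) / (∫ s in (0:ℝ)..ι, Real.exp (-s^2/4)) :=
      div_nonneg hA hI.le
    nlinarith
  · exact hU

lemma profile_measurable (U₀ ι : ℝ) : Measurable (profile U₀ ι) := by
  unfold profile
  refine Measurable.ite (measurableSet_le measurable_id measurable_const) ?_ measurable_const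
  have hc : Continuous fun η : ℝ => ∫ s in (0:ℝ)..η, Real.exp (-s^2/4) :=
    intervalIntegral.continuous_primitive (fun a b => gexp_intble a b) 0
  exact (continuous_const.mul (continuous_const.sub (hc.div_const _))).measurable

/-- lower bound for the profile to the left of `η₂ ≤ ι`. -/
lemma profile_lb {U₀ ι : ℝ} (hU : 0 ≤ U₀) (hι : 0 < ι) {η η₂ : ℝ}
    (h0 : 0 ≤ η₂) (h2 : η₂ ≤ ι) (hη : η ≤ η₂) :
    U₀ * ((ι - η₂) * Real.exp (-ι^2/4)) / (∫ s in (0:ℝ)..ι, Real.exp (-s^2/4))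
      ≤ profile U₀ ι η := by
  have hI := gint_pos hι
  have hηι : η ≤ ι := hη.trans h2
  unfold profile
  rw [if_pos hηι]
  have hmono : (∫ s in (0:ℝ)..η, Real.exp (-s^2/4)) ≤ ∫ s in (0:ℝ)..η₂, Real.exp (-s^2/4) :=
    gint_mono hη
  have hseg : (ι - η₂) * Real.exp (-ι^2/4) ≤ ∫ s in η₂..ι, Real.exp (-s^2/4) := by
    have h := intervalIntegral.integral_mono_on h2 intervalIntegrable_const (gexp_intble η₂ ι)
      (f := fun _ => Real.exp (-ι^2/4)) (g := fun s : ℝ => Real.exp (-s^2/4))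
      (fun s hs => by
        rw [Real.exp_le_exp]
        nlinarith [hs.1, hs.2])
    simpa [smul_eq_mul, mul_comm] using h
  have hsplit := gint_split η₂ ι
  -- ∫₀^η ≤ I - (ι-η₂) e^{-ι²/4}
  have key : (∫ s in (0:ℝ)..η, Real.exp (-s^2/4))
      ≤ (∫ s in (0:ℝ)..ι, Real.exp (-s^2/4)) - (ι - η₂) * Real.exp (-ι^2/4) := by linarith
  rw [div_le_iff₀ hI]
  have hgoal : U₀ * ((ι - η₂) * Real.exp (-ι^2/4))
      ≤ U₀ * ((∫ s in (0:ℝ)..ι, Real.exp (-s^2/4)) - (∫ s in (0:ℝ)..η, Real.exp (-s^2/4))) := by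
    apply mul_le_mul_of_nonneg_left _ hU
    linarith
  calc U₀ * ((ι - η₂) * Real.exp (-ι^2/4))
      ≤ U₀ * ((∫ s in (0:ℝ)..ι, Real.exp (-s^2/4)) - (∫ s in (0:ℝ)..η, Real.exp (-s^2/4))) := hgoal
    _ = U₀ * (1 - (∫ s in (0:ℝ)..η, Real.exp (-s^2/4)) / (∫ s in (0:ℝ)..ι, Real.exp (-s^2/4)))
        * (∫ s in (0:ℝ)..ι, Real.exp (-s^2/4)) := by
          rw [mul_assoc, sub_mul, one_mul, div_mul_cancel₀ _ hI.ne']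

/-- if the profile is at least `ε/2` then `η ≤ ι - (ε/(2U₀)) I`. -/
lemma eta_ub {U₀ ι : ℝ} (hU : 0 < U₀) (hι : 0 < ι) {η ε : ℝ} (hε : 0 < ε)
    (h : ε / 2 ≤ profile U₀ ι η) :
    η ≤ ι - ε / (2 * U₀) * (∫ s in (0:ℝ)..ι, Real.exp (-s^2/4)) := by
  have hI := gint_pos hι
  have hηι : η ≤ ι := by
    by_contra hc
    rw [profile, if_neg hc] at h
    linarith
  rw [profile, if_pos hηι] at h
  set A := ∫ s in (0:ℝ)..η, Real.exp (-s^2/4) with hA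
  set I := ∫ s in (0:ℝ)..ι, Real.exp (-s^2/4) with hIdef
  -- ε/2 * I ≤ U₀ * (I - A)
  have h1 : ε / 2 * I ≤ U₀ * (I - A) := by
    have := mul_le_mul_of_nonneg_right h hI.le
    have hrw : U₀ * (1 - A / I) * I = U₀ * (I - A) := by field_simp
    linarith [hrw ▸ this]
  -- I - A = ∫_η^ι ≤ ι - η
  have h2 : I - A ≤ ι - η := by
    have hsplit := gint_split η ι
    have hub : (∫ s in η..ι, Real.exp (-s^2/4)) ≤ ι - η := by
      have h := intervalIntegral.integral_mono_on hηι (gexp_intble η ι) intervalIntegrable_const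
        (f := fun s : ℝ => Real.exp (-s^2/4)) (g := fun _ => (1:ℝ))
        (fun s _ => by
          rw [← Real.exp_zero, Real.exp_le_exp]
          nlinarith [sq_nonneg s])
      simpa using h
    linarith
  have hrw2 : ε / (2 * U₀) * I = (ε / 2 * I) / U₀ := by ring
  rw [hrw2]
  have hfin : ε / 2 * I / U₀ ≤ ι - η := by
    rw [div_le_iff₀ hU]
    nlinarith
  linarith

lemma profile_comp_intble {U₀ ι : ℝ} (hU : 0 ≤ U₀) (hι : 0 < ι) {x : ℝ} (hx : 0 ≤ x)
    (a b : ℝ) :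
    IntervalIntegrable (fun s => profile U₀ ι (x / Real.sqrt s)) volume a b := by
  have hmeas : Measurable fun s : ℝ => profile U₀ ι (x / Real.sqrt s) :=
    (profile_measurable U₀ ι).comp (measurable_const.div Real.continuous_sqrt.measurable)
  refine IntervalIntegrable.mono_fun' (g := fun _ => U₀) intervalIntegrable_const
    hmeas.aestronglyMeasurable ?_
  refine Filter.Eventually.of_forall (fun s => ?_)
  have hη : 0 ≤ x / Real.sqrt s := div_nonneg hx (Real.sqrt_nonneg s)
  have h1 := profile_nonneg hU hι (x / Real.sqrt s)
  have h2 := profile_le hU hι hη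
  simp only [Real.norm_eq_abs, abs_of_nonneg h1]
  exact h2
set_option maxHeartbeats 2000000 in
/-- **Lemma (structural inequality for the reaction term).**
For the scaled one-dimensional system `∂ₜu = ∂ₓₓu − δk u v`, `∂ₜv = −k u v` on
`(d₁,d₂) × (0,T)` with `u(·,0) = 0`, `v(·,0) = V₀`, `0 ≤ u ≤ U₀`, the explicit
formula `v = V₀ e^{−k z}`, `z(x,t) = ∫₀ᵗ u(x,s) ds`, and uniform convergence of `u_k`
to the self-similar profile and of `z_k` to its integral: for fixed `λ₁, λ₂ > 0`
there exists `K > 0` such that for all `k > K`,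
`k uᵐ v − λ₁ k u v − λ₂ u ≤ 0` on `(d₁,d₂) × (0, d₂² ι⁻²)`. -/
theorem reaction_term_inequality
    (m δ U₀ V₀ d₁ d₂ ι T lam₁ lam₂ : ℝ)
    (hm : 1 < m) (hδ : 0 < δ) (hU₀ : 0 < U₀) (hV₀ : 0 < V₀)
    (hd₁ : 0 < d₁) (hd : d₁ < d₂) (hι : 0 < ι)
    (hιeq : 2 * U₀ / (δ * V₀) = ι * ∫ s in (0:ℝ)..ι, Real.exp ((ι^2 - s^2)/4))
    (hT : d₂^2 / ι^2 ≤ T)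
    (hlam₁ : 0 < lam₁) (hlam₂ : 0 < lam₂)
    (u v : ℝ → ℝ → ℝ → ℝ)
    -- nonnegative classical solutions of the scaled system with the stated data
    (hbounds : ∀ k > (0:ℝ), ∀ x ∈ Icc d₁ d₂, ∀ t ∈ Icc 0 T,
      0 ≤ u k x t ∧ u k x t ≤ U₀ ∧ 0 ≤ v k x t)
    (hu_cont : ∀ k > (0:ℝ),
      ContinuousOn (fun p : ℝ × ℝ => u k p.1 p.2) (Icc d₁ d₂ ×ˢ Icc 0 T))
    (hu_pde : ∀ k > (0:ℝ), ∀ x ∈ Ioo d₁ d₂, ∀ t ∈ Ioo 0 T,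
      HasDerivAt (fun s => u k x s)
        (deriv (fun y => deriv (fun z => u k z t) y) x - δ * k * u k x t * v k x t) t)
    (hv_pde : ∀ k > (0:ℝ), ∀ x ∈ Ioo d₁ d₂, ∀ t ∈ Ioo 0 T,
      HasDerivAt (fun s => v k x s) (-(k * u k x t * v k x t)) t)
    (hu_ic : ∀ k > (0:ℝ), ∀ x ∈ Icc d₁ d₂, u k x 0 = 0)
    (hv_ic : ∀ k > (0:ℝ), ∀ x ∈ Icc d₁ d₂, v k x 0 = V₀)
    -- explicit integration of the `v`-equation
    (hv_formula : ∀ k > (0:ℝ), ∀ x ∈ Icc d₁ d₂, ∀ t ∈ Icc 0 T,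
      v k x t = V₀ * Real.exp (-(k * ∫ s in (0:ℝ)..t, u k x s)))
    -- uniform convergence of `u_k` to the self-similar profile `f^{(U₀, δV₀)}(x/√t)`
    (hconv_u : TendstoUniformlyOn (fun (k : ℝ) (p : ℝ × ℝ) => u k p.1 p.2)
      (fun p => if p.2 = 0 then 0 else profile U₀ ι (p.1 / Real.sqrt p.2))
      atTop (Icc d₁ d₂ ×ˢ Icc 0 (d₂^2 / ι^2)))
    -- uniform convergence of `z_k(x,t) = ∫₀ᵗ u_k(x,s) ds` to `∫₀ᵗ f^{(U₀,δV₀)}(x/√s) ds`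
    (hconv_z : TendstoUniformlyOn (fun (k : ℝ) (p : ℝ × ℝ) => ∫ s in (0:ℝ)..p.2, u k p.1 s)
      (fun p => ∫ s in (0:ℝ)..p.2, profile U₀ ι (p.1 / Real.sqrt s))
      atTop (Icc d₁ d₂ ×ˢ Icc 0 (d₂^2 / ι^2))) :
    ∃ K > (0:ℝ), ∀ k > K, ∀ x ∈ Ioo d₁ d₂, ∀ t ∈ Ioo 0 (d₂^2 / ι^2),
      k * u k x t ^ m * v k x t - lam₁ * (k * u k x t * v k x t) - lam₂ * u k x t ≤ 0 := by
  classical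
  set I : ℝ := ∫ s in (0:ℝ)..ι, Real.exp (-s^2/4) with hIdef
  set ε : ℝ := min (lam₁ ^ (1/(m-1))) U₀ with hεdef
  set η₁ : ℝ := ι - ε / (2*U₀) * I with hη₁def
  set η₂ : ℝ := (η₁ + ι)/2 with hη₂def
  set θ : ℝ := η₁^2/η₂^2 with hθdef
  set θ' : ℝ := max θ (1/2) with hθ'def
  set c₁ : ℝ := U₀ * ((ι - η₂) * Real.exp (-ι^2/4)) / I with hc₁def
  set t₀ : ℝ := d₁^2/ι^2 with ht₀def
  set Zl : ℝ := c₁ * (t₀ * (1 - θ')) with hZldef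
  set c₀ : ℝ := Zl/2 with hc₀def
  clear_value I ε η₁ η₂ θ θ' c₁ t₀ Zl c₀
  have hI : 0 < I := by rw [hIdef]; exact gint_pos hι
  have hε : 0 < ε := by
    rw [hεdef]; exact lt_min (Real.rpow_pos_of_pos hlam₁ _) hU₀
  have hεU : ε ≤ U₀ := by rw [hεdef]; exact min_le_right _ _
  have hεlam : ε ≤ lam₁ ^ (1/(m-1)) := by rw [hεdef]; exact min_le_left _ _
  have hη₁l : ι/2 ≤ η₁ := by
    have h1 : I ≤ ι := by rw [hIdef]; exact gint_le_self hι
    have h2 : ε / (2*U₀) ≤ 1/2 := by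
      rw [div_le_div_iff₀ (by positivity) (by norm_num : (0:ℝ) < 2)]
      linarith only [hεU, hU₀]
    have h3 : ε/(2*U₀)*I ≤ 1/2*ι :=
      mul_le_mul h2 h1 hI.le (by norm_num)
    rw [hη₁def]; linarith only [h3]
  have hη₁u : η₁ < ι := by
    have hpos : 0 < ε/(2*U₀)*I := by positivity
    rw [hη₁def]; linarith only [hpos]
  have hη₁0 : 0 < η₁ := by linarith only [hη₁l, hι]
  have hη₂1 : η₁ < η₂ := by rw [hη₂def]; linarith only [hη₁u]
  have hη₂ι : η₂ < ι := by rw [hη₂def]; linarith only [hη₁u]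
  have hη₂0 : 0 < η₂ := by linarith only [hη₁0, hη₂1]
  have hθ0 : 0 < θ := by
    rw [hθdef]; exact div_pos (pow_pos hη₁0 2) (pow_pos hη₂0 2)
  have hθ1 : θ < 1 := by
    rw [hθdef, div_lt_one (pow_pos hη₂0 2)]
    exact pow_lt_pow_left₀ hη₂1 hη₁0.le (by norm_num)
  have hθ'l : (1:ℝ)/2 ≤ θ' := by rw [hθ'def]; exact le_max_right _ _
  have hθ'0 : 0 < θ' := by linarith only [hθ'l]
  have hθ'1 : θ' < 1 := by rw [hθ'def]; exact max_lt hθ1 (by norm_num)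
  have hθθ' : θ ≤ θ' := by rw [hθ'def]; exact le_max_left _ _
  have hc₁ : 0 < c₁ := by
    have h1 : 0 < ι - η₂ := by linarith only [hη₂ι]
    rw [hc₁def]
    exact div_pos (mul_pos hU₀ (mul_pos h1 (Real.exp_pos _))) hI
  have ht₀ : 0 < t₀ := by
    rw [ht₀def]; exact div_pos (pow_pos hd₁ 2) (pow_pos hι 2)
  have hZl : 0 < Zl := by
    have h1 : 0 < 1 - θ' := by linarith only [hθ'1]
    rw [hZldef]
    exact mul_pos hc₁ (mul_pos ht₀ h1)
  have hc₀ : 0 < c₀ := by rw [hc₀def]; linarith only [hZl]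
  -- the three thresholds
  obtain ⟨K₁, hK₁⟩ := Filter.eventually_atTop.mp
    ((Metric.tendstoUniformlyOn_iff.mp hconv_u) (ε/2) (half_pos hε))
  obtain ⟨K₂, hK₂⟩ := Filter.eventually_atTop.mp
    ((Metric.tendstoUniformlyOn_iff.mp hconv_z) c₀ hc₀)
  have htend : Tendsto (fun k : ℝ => U₀ ^ (m-1) * V₀ / c₀ * ((c₀*k)^(1:ℕ) * Real.exp (-(c₀*k))))
      atTop (𝓝 0) := by
    have h0 := Real.tendsto_pow_mul_exp_neg_atTop_nhds_zero 1
    have hlin : Tendsto (fun k : ℝ => c₀ * k) atTop atTop :=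
      Tendsto.const_mul_atTop hc₀ tendsto_id
    have h2 := (h0.comp hlin).const_mul (U₀ ^ (m-1) * V₀ / c₀)
    simpa [Function.comp] using h2
  obtain ⟨K₃, hK₃⟩ := Filter.eventually_atTop.mp (htend.eventually_lt_const hlam₂)
  refine ⟨max (max K₁ K₂) (max K₃ 1),
    lt_of_lt_of_le zero_lt_one ((le_max_right K₃ 1).trans (le_max_right _ _)), ?_⟩
  intro k hk x hx t ht
  have hkK₁ : K₁ ≤ k := ((le_max_left K₁ K₂).trans (le_max_left _ _)).trans hk.le
  have hkK₂ : K₂ ≤ k := ((le_max_right K₁ K₂).trans (le_max_left _ _)).trans hk.le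
  have hkK₃ : K₃ ≤ k := ((le_max_left K₃ 1).trans (le_max_right _ _)).trans hk.le
  have hk0 : (0:ℝ) < k :=
    lt_of_lt_of_le zero_lt_one (((le_max_right K₃ 1).trans (le_max_right _ _)).trans hk.le)
  have hxI : x ∈ Icc d₁ d₂ := ⟨hx.1.le, hx.2.le⟩
  have htT : t ∈ Icc 0 T := ⟨ht.1.le, ht.2.le.trans hT⟩
  have hpS : (x, t) ∈ Icc d₁ d₂ ×ˢ Icc 0 (d₂^2/ι^2) := ⟨hxI, ht.1.le, ht.2.le⟩
  obtain ⟨hu0, huU, hv0⟩ := hbounds k hk0 x hxI t htT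
  have hm0 : m ≠ 0 := ne_of_gt (lt_trans zero_lt_one hm)
  by_cases hcase : u k x t ≤ ε
  · -- small-u case : u^m ≤ lam₁ u
    have hum : u k x t ^ m ≤ lam₁ * u k x t := by
      rcases eq_or_lt_of_le hu0 with h0 | h0
      · rw [← h0, Real.zero_rpow hm0]
        simp
      · have e2 : u k x t ^ (m-1) ≤ ε ^ (m-1) :=
          Real.rpow_le_rpow hu0 hcase (by linarith only [hm])
        have e3 : ε ^ (m-1) ≤ (lam₁ ^ (1/(m-1))) ^ (m-1) :=
          Real.rpow_le_rpow hε.le hεlam (by linarith only [hm])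
        have e4 : (lam₁ ^ (1/(m-1))) ^ (m-1) = lam₁ := by
          rw [← Real.rpow_mul hlam₁.le, one_div,
            inv_mul_cancel₀ (sub_ne_zero.mpr (ne_of_gt hm)), Real.rpow_one]
        have e5 : u k x t ^ (m-1) ≤ lam₁ := by
          calc u k x t ^ (m-1) ≤ ε ^ (m-1) := e2
            _ ≤ (lam₁ ^ (1/(m-1))) ^ (m-1) := e3
            _ = lam₁ := e4
        calc u k x t ^ m = u k x t ^ (m-1) * u k x t := by
              rw [show m = (m-1)+1 by ring, Real.rpow_add h0, Real.rpow_one]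
              ring_nf
          _ ≤ lam₁ * u k x t := mul_le_mul_of_nonneg_right e5 hu0
    have h2 : k * (u k x t ^ m * v k x t) ≤ k * ((lam₁ * u k x t) * v k x t) :=
      mul_le_mul_of_nonneg_left (mul_le_mul_of_nonneg_right hum hv0) hk0.le
    have e6 : k * u k x t ^ m * v k x t = k * (u k x t ^ m * v k x t) := by ring
    have e7 : lam₁ * (k * u k x t * v k x t) = k * ((lam₁ * u k x t) * v k x t) := by ring
    have e8 : 0 ≤ lam₂ * u k x t := mul_nonneg hlam₂.le hu0
    linarith only [h2, e6, e7, e8]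
  · -- large-u case
    rw [not_le] at hcase
    have hne : t ≠ 0 := ne_of_gt ht.1
    have hdist : dist (if t = 0 then (0:ℝ) else profile U₀ ι (x / Real.sqrt t)) (u k x t) < ε/2 :=
      hK₁ k hkK₁ (x, t) hpS
    rw [if_neg hne, Real.dist_eq] at hdist
    have hdist' := abs_lt.mp hdist
    have hprof : ε/2 ≤ profile U₀ ι (x / Real.sqrt t) := by
      linarith only [hdist'.1, hcase]
    have hst : 0 < Real.sqrt t := Real.sqrt_pos.mpr ht.1
    have hx0 : 0 < x := lt_trans hd₁ hx.1
    have hη0 : 0 < x / Real.sqrt t := div_pos hx0 hst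
    have hηle : x / Real.sqrt t ≤ η₁ := by
      have h := eta_ub hU₀ hι hε hprof
      rw [hη₁def, hIdef]
      exact h
    -- t ≥ t₀
    have ht₀t : t₀ ≤ t := by
      have hηι : x / Real.sqrt t ≤ ι := hηle.trans hη₁u.le
      rw [div_le_iff₀ hst] at hηι
      have h1 : d₁ / ι ≤ Real.sqrt t := by
        rw [div_le_iff₀ hι]
        calc d₁ ≤ x := hx.1.le
          _ ≤ ι * Real.sqrt t := hηι
          _ = Real.sqrt t * ι := mul_comm _ _
      have h2 := Real.sq_sqrt ht.1.le
      rw [ht₀def]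
      calc d₁^2/ι^2 = (d₁/ι)^2 := by rw [div_pow]
        _ ≤ Real.sqrt t ^ 2 := by
            apply pow_le_pow_left₀ (by positivity) h1
        _ = t := h2
    -- lower bound for the limiting Z at (x,t)
    have hZ : Zl ≤ ∫ s in (0:ℝ)..t, profile U₀ ι (x / Real.sqrt s) := by
      have int1 := profile_comp_intble hU₀.le hι hx0.le 0 (θ'*t)
      have int2 := profile_comp_intble hU₀.le hι hx0.le (θ'*t) t
      have hsplit := intervalIntegral.integral_add_adjacent_intervals int1 int2
      have hθ't : 0 < θ'*t := mul_pos hθ'0 ht.1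
      have h1 : 0 ≤ ∫ s in (0:ℝ)..(θ'*t), profile U₀ ι (x / Real.sqrt s) :=
        intervalIntegral.integral_nonneg hθ't.le (fun s _ => profile_nonneg hU₀.le hι _)
      have hθ'tle : θ'*t ≤ t := by
        calc θ'*t ≤ 1*t := mul_le_mul_of_nonneg_right hθ'1.le ht.1.le
          _ = t := one_mul t
      have hptw : ∀ s ∈ Icc (θ'*t) t, c₁ ≤ profile U₀ ι (x / Real.sqrt s) := by
        intro s hs
        have hs0 : 0 < s := lt_of_lt_of_le hθ't hs.1
        have hss : Real.sqrt (θ'*t) ≤ Real.sqrt s := Real.sqrt_le_sqrt hs.1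
        have hsθ : Real.sqrt (θ'*t) = Real.sqrt θ' * Real.sqrt t := Real.sqrt_mul hθ'0.le t
        have hsqθ'pos : 0 < Real.sqrt θ' := Real.sqrt_pos.mpr hθ'0
        have hsθtpos : 0 < Real.sqrt (θ'*t) := Real.sqrt_pos.mpr hθ't
        have hch : x / Real.sqrt s ≤ η₂ := by
          have hA : x / Real.sqrt s ≤ x / Real.sqrt (θ'*t) :=
            div_le_div_of_nonneg_left hx0.le hsθtpos hss
          have hB : x / Real.sqrt (θ'*t) = (x / Real.sqrt t) / Real.sqrt θ' := by
            rw [hsθ, mul_comm, ← div_div]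
          have hsθv : Real.sqrt θ = η₁ / η₂ := by
            rw [hθdef, show η₁^2/η₂^2 = (η₁/η₂)^2 by rw [div_pow],
              Real.sqrt_sq (by positivity)]
          have hθ'ge : η₁ / η₂ ≤ Real.sqrt θ' := by
            rw [← hsθv]; exact Real.sqrt_le_sqrt hθθ'
          have hη₁η₂pos : 0 < η₁ / η₂ := div_pos hη₁0 hη₂0
          have hC : (x / Real.sqrt t) / Real.sqrt θ' ≤ η₁ / Real.sqrt θ' := by
            gcongr
          have hD : η₁ / Real.sqrt θ' ≤ η₁ / (η₁/η₂) :=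
            div_le_div_of_nonneg_left hη₁0.le hη₁η₂pos hθ'ge
          have hE : η₁ / (η₁/η₂) = η₂ := by
            field_simp
          calc x / Real.sqrt s ≤ x / Real.sqrt (θ'*t) := hA
            _ = (x / Real.sqrt t) / Real.sqrt θ' := hB
            _ ≤ η₁ / Real.sqrt θ' := hC
            _ ≤ η₁ / (η₁/η₂) := hD
            _ = η₂ := hE
        have h := profile_lb hU₀.le hι hη₂0.le hη₂ι.le hch
        rw [hc₁def, hIdef]
        exact h
      have h2 : (t - θ'*t) * c₁ ≤ ∫ s in (θ'*t)..t, profile U₀ ι (x / Real.sqrt s) := by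
        have h := intervalIntegral.integral_mono_on (f := fun _ => c₁)
          (g := fun s => profile U₀ ι (x / Real.sqrt s)) hθ'tle
          intervalIntegrable_const int2 hptw
        simpa [intervalIntegral.integral_const, smul_eq_mul, mul_comm] using h
      have h3 : Zl ≤ (t - θ'*t) * c₁ := by
        rw [hZldef]
        have hq : t₀ * (1 - θ') ≤ t * (1 - θ') :=
          mul_le_mul_of_nonneg_right ht₀t (by linarith)
        have hq2 : c₁ * (t₀ * (1 - θ')) ≤ c₁ * (t * (1 - θ')) :=
          mul_le_mul_of_nonneg_left hq hc₁.le
        have hq3 : c₁ * (t * (1 - θ')) = (t - θ'*t) * c₁ := by ring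
        linarith only [hq2, hq3]
      linarith only [hsplit, h1, h2, h3]
    -- z_k ≥ c₀
    have hdistz : dist (∫ s in (0:ℝ)..t, profile U₀ ι (x / Real.sqrt s))
        (∫ s in (0:ℝ)..t, u k x s) < c₀ := hK₂ k hkK₂ (x, t) hpS
    rw [Real.dist_eq] at hdistz
    have hdistz' := abs_lt.mp hdistz
    have hz : c₀ ≤ ∫ s in (0:ℝ)..t, u k x s := by
      linarith only [hdistz'.2, hZ, hc₀def]
    -- v bound
    have hvf := hv_formula k hk0 x hxI t htT
    have hvb : v k x t ≤ V₀ * Real.exp (-(c₀ * k)) := by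
      rw [hvf]
      apply mul_le_mul_of_nonneg_left _ hV₀.le
      apply Real.exp_le_exp.mpr
      have hmul : k * c₀ ≤ k * ∫ s in (0:ℝ)..t, u k x s :=
        mul_le_mul_of_nonneg_left hz hk0.le
      have e : c₀ * k = k * c₀ := mul_comm _ _
      linarith only [hmul, e]
    have hK₃' := hK₃ k hkK₃
    simp only [pow_one] at hK₃'
    have hc₀' : c₀ ≠ 0 := ne_of_gt hc₀
    have hbound : U₀^(m-1) * V₀ * (k * Real.exp (-(c₀*k))) ≤ lam₂ := by
      have heq : U₀^(m-1) * V₀ * (k * Real.exp (-(c₀*k)))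
          = U₀^(m-1) * V₀ / c₀ * (c₀ * k * Real.exp (-(c₀*k))) := by
        field_simp
      rw [heq]
      exact hK₃'.le
    have hum : u k x t ^ m ≤ U₀^(m-1) * u k x t := by
      rcases eq_or_lt_of_le hu0 with h0 | h0
      · rw [← h0, Real.zero_rpow hm0]
        simp
      · calc u k x t ^ m = u k x t ^ (m-1) * u k x t := by
              rw [show m = (m-1)+1 by ring, Real.rpow_add h0, Real.rpow_one]
              ring_nf
          _ ≤ U₀^(m-1) * u k x t :=
              mul_le_mul_of_nonneg_right
                (Real.rpow_le_rpow hu0 huU (by linarith only [hm])) hu0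
    have hA : k * u k x t ^ m * v k x t ≤ lam₂ * u k x t := by
      have hstep : k * u k x t ^ m * v k x t
          ≤ k * (U₀^(m-1) * u k x t) * (V₀ * Real.exp (-(c₀*k))) := by
        apply mul_le_mul (mul_le_mul_of_nonneg_left hum hk0.le) hvb hv0
        exact mul_nonneg hk0.le (mul_nonneg (Real.rpow_pos_of_pos hU₀ _).le hu0)
      calc k * u k x t ^ m * v k x t
          ≤ k * (U₀^(m-1) * u k x t) * (V₀ * Real.exp (-(c₀*k))) := hstep
        _ = (U₀^(m-1) * V₀ * (k * Real.exp (-(c₀*k)))) * u k x t := by ring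
        _ ≤ lam₂ * u k x t := mul_le_mul_of_nonneg_right hbound hu0
    have hBnn : 0 ≤ lam₁ * (k * u k x t * v k x t) :=
      mul_nonneg hlam₁.le (mul_nonneg (mul_nonneg hk0.le hu0) hv0)
    linarith only [hA, hBnn]
end
end

section
/- Let U₀, V₀ > 0, let ι = ι(U₀,V₀) > 0 be the unique positive constant with 2U₀/V₀ = ι ∫₀^ι e^{(ι²−s²)/4} ds, and define U(x,t) := f^{(U₀,V₀)}(x/√t) for x ≥ 0 and t > 0. Then: (i) at every point (x,t) with t > 0 and 0 < x < ι√t, U is twice differentiable in x and once in t and satisfies the one-dimensional heat equation ∂_t U(x,t) = ∂_{xx} U(x,t); (ii) U(0,t) = U₀ for all t > 0; (iii) U(ι√t, t) = 0 for all t > 0; (iv) for every fixed x > 0, U(x,t) → 0 as t → 0⁺. -/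
open Set Filter Real MeasureTheory Topology

noncomputable section

/-- The antiderivative `F(η) = ∫₀^η e^{−s²/4} ds`. -/
def F (η : ℝ) : ℝ := ∫ s in (0:ℝ)..η, Real.exp (-s^2/4)

lemma contF : Continuous (fun s : ℝ => Real.exp (-s^2/4)) := by continuity

lemma hasDerivAt_F (η : ℝ) : HasDerivAt F (Real.exp (-η^2/4)) η :=
  intervalIntegral.integral_hasDerivAt_right
    (contF.intervalIntegrable 0 η)
    (contF.aestronglyMeasurable.stronglyMeasurableAtFilter)
    contF.continuousAt

lemma F_pos {ι : ℝ} (hι : 0 < ι) : 0 < F ι :=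
  intervalIntegral.intervalIntegral_pos_of_pos (contF.intervalIntegrable 0 ι)
    (fun _ => Real.exp_pos _) hι

lemma profile_eq_aux (U₀ ι η : ℝ) (h : η ≤ ι) :
    profile U₀ ι η = U₀ - (U₀ / F ι) * F η := by
  simp only [profile, if_pos h, F]
  ring

/-- **Lemma (the self-similar solution).**
With `ι = ι(U₀,V₀)` determined by `2U₀/V₀ = ι ∫₀^ι e^{(ι²−s²)/4} ds` and
`U(x,t) = f^{(U₀,V₀)}(x/√t)`:
(i) `U` is twice differentiable in `x`, once in `t`, and satisfies `∂ₜU = ∂ₓₓU` at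
every point with `t > 0`, `0 < x < ι√t`;
(ii) `U(0,t) = U₀` for `t > 0`;
(iii) `U(ι√t, t) = 0` for `t > 0`;
(iv) `U(x,t) → 0` as `t → 0⁺`, for each fixed `x > 0`. -/
theorem selfsimilar_solution_properties
    (U₀ V₀ ι : ℝ) (hU₀ : 0 < U₀) (hV₀ : 0 < V₀) (hι : 0 < ι)
    (hιeq : 2 * U₀ / V₀ = ι * ∫ s in (0:ℝ)..ι, Real.exp ((ι^2 - s^2)/4)) :
    -- (i) the heat equation in the region `0 < x < ι√t`
    (∀ t : ℝ, 0 < t → ∀ x : ℝ, 0 < x → x < ι * Real.sqrt t →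
      DifferentiableAt ℝ (fun y => profile U₀ ι (y / Real.sqrt t)) x ∧
      DifferentiableAt ℝ (deriv (fun y => profile U₀ ι (y / Real.sqrt t))) x ∧
      HasDerivAt (fun s => profile U₀ ι (x / Real.sqrt s))
        (deriv (deriv (fun y => profile U₀ ι (y / Real.sqrt t))) x) t) ∧
    -- (ii) `U(0,t) = U₀`
    (∀ t : ℝ, 0 < t → profile U₀ ι (0 / Real.sqrt t) = U₀) ∧
    -- (iii) `U(ι√t, t) = 0`
    (∀ t : ℝ, 0 < t → profile U₀ ι ((ι * Real.sqrt t) / Real.sqrt t) = 0) ∧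
    -- (iv) `U(x, t) → 0` as `t → 0⁺` for fixed `x > 0`
    (∀ x : ℝ, 0 < x →
      Tendsto (fun t => profile U₀ ι (x / Real.sqrt t)) (𝓝[>] 0) (𝓝 0)) := by
  refine ⟨?_, ?_, ?_, ?_⟩
  · -- (i)
    set c : ℝ := U₀ / F ι with hc
    set g : ℝ → ℝ := fun η => U₀ - c * F η with hgdef
    have hg : ∀ η, HasDerivAt g (-(c * Real.exp (-η^2/4))) η := fun η =>
      ((hasDerivAt_F η).const_mul c).const_sub U₀
    intro t ht x hx hxlt
    set st := Real.sqrt t with hstdef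
    have hst : 0 < st := Real.sqrt_pos.mpr ht
    have hst2 : st * st = t := Real.mul_self_sqrt ht.le
    have h_eq : (fun y => profile U₀ ι (y / st)) =ᶠ[𝓝 x] (fun y => g (y / st)) := by
      filter_upwards [Iio_mem_nhds hxlt] with y hy
      have hy' : y / st ≤ ι := by
        rw [div_le_iff₀ hst]
        have := mem_Iio.mp hy
        linarith
      exact profile_eq_aux U₀ ι _ hy'
    set G : ℝ → ℝ := fun y => -(c / st) * Real.exp (-(y/st)^2/4) with hGdef
    have hGy : ∀ y, HasDerivAt (fun y => g (y / st)) (G y) y := by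
      intro y
      have h1 : HasDerivAt (fun y : ℝ => y / st) (1 / st) y := (hasDerivAt_id y).div_const st
      have h2 := (hg (y / st)).comp y h1
      refine h2.congr_deriv ?_
      symm
      simp only [hGdef]
      ring
    have hderiv_g : deriv (fun y => g (y / st)) = G := funext fun y => (hGy y).deriv
    have hd : deriv (fun y => profile U₀ ι (y / st)) =ᶠ[𝓝 x] G := by
      have := h_eq.deriv
      rwa [hderiv_g] at this
    set G2 : ℝ → ℝ := fun y => c * y / (2 * t * st) * Real.exp (-(y/st)^2/4) with hG2def
    have hG2y : ∀ y, HasDerivAt G (G2 y) y := by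
      intro y
      have h1 : HasDerivAt (fun y : ℝ => y / st) (1 / st) y := (hasDerivAt_id y).div_const st
      have h2 := ((((h1.pow 2).neg).div_const 4).exp).const_mul (-(c / st))
      refine h2.congr_deriv ?_
      symm
      simp only [hG2def]
      simp only [Pi.neg_apply, Pi.pow_apply]
      rw [← hst2]
      field_simp
      have hsy : st * (y / st) = y := by field_simp
      linear_combination (-(4 * c)) * hsy
    refine ⟨(h_eq.differentiableAt_iff).mpr (hGy x).differentiableAt,
      (hd.differentiableAt_iff).mpr (hG2y x).differentiableAt, ?_⟩
    have hkey : deriv (deriv (fun y => profile U₀ ι (y / st))) x = G2 x := by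
      rw [hd.deriv_eq, (hG2y x).deriv]
    rw [hkey]
    have h_eqt : (fun s => profile U₀ ι (x / Real.sqrt s))
        =ᶠ[𝓝 t] (fun s => g (x / Real.sqrt s)) := by
      have hopen : {s : ℝ | x < ι * Real.sqrt s} ∈ 𝓝 t :=
        (isOpen_lt continuous_const (continuous_const.mul Real.continuous_sqrt)).mem_nhds hxlt
      filter_upwards [hopen] with s hs
      have hs' : 0 < Real.sqrt s := by
        nlinarith [Real.sqrt_nonneg s, mem_setOf.mp hs]
      have : x / Real.sqrt s ≤ ι := by
        rw [div_le_iff₀ hs']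
        have := mem_setOf.mp hs
        linarith
      exact profile_eq_aux U₀ ι _ this
    have hsq : HasDerivAt Real.sqrt (1 / (2 * st)) t := Real.hasDerivAt_sqrt (ne_of_gt ht)
    have hdiv : HasDerivAt (fun s => x / Real.sqrt s)
        ((0 * st - x * (1 / (2 * st))) / st ^ 2) t :=
      (hasDerivAt_const t x).div hsq (ne_of_gt hst)
    have hcomp := (hg (x / st)).comp t hdiv
    have hval : -(c * Real.exp (-(x / st) ^ 2 / 4)) * ((0 * st - x * (1 / (2 * st))) / st ^ 2)
        = G2 x := by
      simp only [hG2def]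
      rw [← hst2]
      field_simp
      ring
    rw [hval] at hcomp
    exact hcomp.congr_of_eventuallyEq h_eqt
  · -- (ii)
    intro t ht
    simp [profile, hι.le]
  · -- (iii)
    intro t ht
    have hst : Real.sqrt t ≠ 0 := (Real.sqrt_pos.mpr ht).ne'
    rw [mul_div_assoc, div_self hst, mul_one]
    have hF : F ι ≠ 0 := (F_pos hι).ne'
    simp only [profile, if_pos le_rfl]
    rw [show (∫ s in (0:ℝ)..ι, Real.exp (-s^2/4)) = F ι from rfl, div_self hF]
    ring
  · -- (iv)
    intro x hx
    have h0 : (0:ℝ) < (x / ι)^2 := by positivity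
    apply Tendsto.congr' (f₁ := fun _ : ℝ => (0:ℝ))
    · symm
      filter_upwards [Ioo_mem_nhdsGT_of_mem (left_mem_Ico.mpr h0)] with t htm
      obtain ⟨ht0, htlt⟩ := htm
      have hst : 0 < Real.sqrt t := Real.sqrt_pos.mpr ht0
      have hlt : Real.sqrt t < x / ι := by
        have := Real.sqrt_lt_sqrt ht0.le htlt
        rwa [Real.sqrt_sq (by positivity : (0:ℝ) ≤ x / ι)] at this
      have : ι < x / Real.sqrt t := by
        rw [lt_div_iff₀ hst]
        calc ι * Real.sqrt t < ι * (x / ι) := by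
              exact mul_lt_mul_of_pos_left hlt hι
          _ = x := by field_simp
      simp [profile, not_le.mpr this]
    · exact tendsto_const_nhds
end
end
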